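/- Let X be a geodesic metric space in which geodesics between points are unique, and suppose every geodesic triangle with one vertex equal to a fixed point c ∈ X satisfies the CAT(0) comparison inequality. Then any local geodesic γ : [0,1] → X with γ(0) = c is a (global) geodesic. -/

import Mathlib

/-- A geodesic of speed `σ`, parameterized by `[0,1]`. -/
def IsGeodesicSpeed {X : Type*} [MetricSpace X] (γ : ℝ → X) (σ : ℝ) : Prop :=
  ∀ s ∈ Set.Icc (0:ℝ) 1, ∀ t ∈ Set.Icc (0:ℝ) 1,
    dist (γ s) (γ t) = σ * |s - t|

/-- A geodesic parameterized proportionally to arclength by `[0,1]`. -/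
def IsGeodesic {X : Type*} [MetricSpace X] (γ : ℝ → X) : Prop :=
  IsGeodesicSpeed γ (dist (γ 0) (γ 1))

/-- A local geodesic of speed `σ`: around each parameter it restricts to a geodesic
of speed `σ`. -/
def IsLocalGeodesicSpeed {X : Type*} [MetricSpace X] (γ : ℝ → X) (σ : ℝ) : Prop :=
  ∀ u ∈ Set.Icc (0:ℝ) 1, ∃ ε > 0,
    ∀ s ∈ Set.Icc (0:ℝ) 1 ∩ Set.Icc (u - ε) (u + ε),
      ∀ t ∈ Set.Icc (0:ℝ) 1 ∩ Set.Icc (u - ε) (u + ε),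
        dist (γ s) (γ t) = σ * |s - t|

private lemma exists_cmp (a b L : ℝ) (ha : 0 < a) (hb : 0 ≤ b) (hL : 0 ≤ L)
    (h1 : L ≤ a + b) (h2 : a ≤ b + L) (h3 : b ≤ a + L) :
    ∃ p q : ℝ, p ^ 2 + q ^ 2 = L ^ 2 ∧ (p - a) ^ 2 + q ^ 2 = b ^ 2 := by
  set p := (a^2 + L^2 - b^2) / (2*a) with hp
  have hp2 : p^2 ≤ L^2 := by
    rw [hp, div_pow, div_le_iff₀ (by positivity)]
    nlinarith [mul_nonneg (mul_nonneg (mul_nonneg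
      (by linarith : (0:ℝ) ≤ a + b - L) (by linarith : (0:ℝ) ≤ b + L - a))
      (by linarith : (0:ℝ) ≤ a + L - b)) (by linarith : (0:ℝ) ≤ a + L + b)]
  refine ⟨p, Real.sqrt (L^2 - p^2), ?_, ?_⟩
  · rw [Real.sq_sqrt (by linarith)]; ring
  · rw [Real.sq_sqrt (by linarith)]
    have hane : (2*a) ≠ 0 := by positivity
    field_simp [hp]
    have hpa : p*(2*a) = a^2+L^2-b^2 := by rw [hp, div_mul_cancel₀ _ hane]
    clear_value p
    linear_combination (-1:ℝ) * hpa

private lemma cat_step {X : Type*} [MetricSpace X] (c : X)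
    (hgeo : ∀ x y : X, ∃ γ : ℝ → X, γ 0 = x ∧ γ 1 = y ∧ IsGeodesic γ)
    (hcat : ∀ γ₁ γ₂ γ₃ : ℝ → X, IsGeodesic γ₁ → IsGeodesic γ₂ → IsGeodesic γ₃ →
      γ₁ 0 = c → γ₂ 0 = c → γ₃ 0 = γ₁ 1 → γ₃ 1 = γ₂ 1 →
      ∀ x' y' z' : ℂ,
        dist x' y' = dist c (γ₁ 1) → dist x' z' = dist c (γ₂ 1) →
        dist y' z' = dist (γ₁ 1) (γ₂ 1) →
        ∀ s ∈ Set.Icc (0:ℝ) 1, ∀ t ∈ Set.Icc (0:ℝ) 1,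
          dist (γ₁ s) (γ₂ t) ≤ dist (x' + s • (y' - x')) (x' + t • (z' - x')) ∧
          dist (γ₁ s) (γ₃ t) ≤ dist (x' + s • (y' - x')) (y' + t • (z' - y')) ∧
          dist (γ₂ s) (γ₃ t) ≤ dist (x' + s • (z' - x')) (y' + t • (z' - y')))
    (γ : ℝ → X) (σ T η : ℝ) (hσ : 0 < σ) (hT : 0 < T) (hη : 0 < η) (hηT : η ≤ T)
    (hγ0 : γ 0 = c)
    (hTabs : ∀ s ∈ Set.Icc (0:ℝ) T, ∀ s' ∈ Set.Icc (0:ℝ) T,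
      dist (γ s) (γ s') = σ * |s - s'|)
    (hwabs : ∀ x y : ℝ, T - η ≤ x → x ≤ T + η → T - η ≤ y → y ≤ T + η →
      dist (γ x) (γ y) = σ * |x - y|) :
    σ * (T + η) ≤ dist c (γ (T + η)) := by
  obtain ⟨γ₂, hγ₂0, hγ₂1, hγ₂⟩ := hgeo c (γ (T + η))
  have hcy : dist c (γ T) = σ * T := by
    have h := hTabs 0 ⟨le_rfl, hT.le⟩ T ⟨hT.le, le_rfl⟩
    rw [hγ0] at h
    rw [h, abs_of_nonpos (by linarith)]; ring
  have hyz : dist (γ T) (γ (T + η)) = σ * η := by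
    rw [hwabs T (T+η) (by linarith) (by linarith) (by linarith) (by linarith),
      abs_of_nonpos (by linarith)]; ring
  have hLnn : (0:ℝ) ≤ dist c (γ (T+η)) := dist_nonneg
  have hLab : dist c (γ (T+η)) ≤ σ*T + σ*η := by
    calc dist c (γ (T+η)) ≤ dist c (γ T) + dist (γ T) (γ (T+η)) := dist_triangle _ _ _
      _ = σ*T + σ*η := by rw [hcy, hyz]
  have haL : σ*T ≤ σ*η + dist c (γ (T+η)) := by
    rw [← hcy]
    calc dist c (γ T) ≤ dist c (γ (T+η)) + dist (γ (T+η)) (γ T) := dist_triangle _ _ _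
      _ = σ*η + dist c (γ (T+η)) := by rw [dist_comm (γ (T+η)) (γ T), hyz]; ring
  have hbL : σ*η ≤ σ*T + dist c (γ (T+η)) := by
    rw [← hyz]
    calc dist (γ T) (γ (T+η)) ≤ dist (γ T) c + dist c (γ (T+η)) := dist_triangle _ _ _
      _ = σ*T + dist c (γ (T+η)) := by rw [dist_comm, hcy]
  obtain ⟨p, q, hpq1, hpq2⟩ := exists_cmp (σ*T) (σ*η) (dist c (γ (T+η)))
    (mul_pos hσ hT) (mul_pos hσ hη).le hLnn hLab haL hbL
  -- geodesics
  have hg1 : IsGeodesic (fun u => γ (T * u)) := by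
    intro s hs t ht
    dsimp only
    have hmem : ∀ u ∈ Set.Icc (0:ℝ) 1, T * u ∈ Set.Icc (0:ℝ) T :=
      fun u hu => ⟨mul_nonneg hT.le hu.1, mul_le_of_le_one_right hT.le hu.2⟩
    rw [hTabs (T*s) (hmem s hs) (T*t) (hmem t ht), show T*0 = 0 by ring,
      show T*1 = T by ring]
    have h := hTabs 0 ⟨le_rfl, hT.le⟩ T ⟨hT.le, le_rfl⟩
    rw [h, show T*s - T*t = T*(s-t) by ring, abs_mul, abs_of_nonneg hT.le,
      abs_of_nonpos (by linarith : (0:ℝ) - T ≤ 0)]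
    ring
  have hg3 : IsGeodesic (fun u => γ (T + η * u)) := by
    intro s hs t ht
    dsimp only
    have hmem : ∀ u ∈ Set.Icc (0:ℝ) 1, T - η ≤ T + η * u ∧ T + η * u ≤ T + η := by
      intro u hu
      constructor
      · nlinarith [hu.1]
      · nlinarith [hu.2]
    obtain ⟨hs1, hs2⟩ := hmem s hs
    obtain ⟨ht1, ht2⟩ := hmem t ht
    rw [hwabs _ _ hs1 hs2 ht1 ht2, show T + η*0 = T by ring, show T + η*1 = T + η by ring,
      hyz, show T + η*s - (T + η*t) = η*(s-t) by ring, abs_mul, abs_of_nonneg hη.le]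
    ring
  set s₀ : ℝ := (T - η)/T with hs₀
  have hs₀mem : s₀ ∈ Set.Icc (0:ℝ) 1 := by
    constructor
    · apply div_nonneg (by linarith) hT.le
    · rw [div_le_one hT]; linarith
  have H := (hcat (fun u => γ (T * u)) γ₂ (fun u => γ (T + η * u)) hg1 hγ₂ hg3
    (show γ (T * 0) = c by rw [mul_zero, hγ0])
    hγ₂0
    (show γ (T + η * 0) = γ (T * 1) by rw [mul_zero, add_zero, mul_one])
    (show γ (T + η * 1) = γ₂ 1 by rw [mul_one, hγ₂1])
    (⟨0,0⟩ : ℂ) (⟨σ*T, 0⟩ : ℂ) (⟨p, q⟩ : ℂ)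
    (show dist (⟨0,0⟩ : ℂ) (⟨σ*T, 0⟩ : ℂ) = dist c (γ (T * 1)) by
      rw [Complex.dist_eq_re_im, mul_one, hcy]
      show Real.sqrt ((0 - σ*T)^2 + (0-0)^2) = σ*T
      rw [show (0 - σ*T)^2 + ((0:ℝ)-0)^2 = (σ*T)^2 by ring,
        Real.sqrt_sq (by positivity)])
    (show dist (⟨0,0⟩ : ℂ) (⟨p, q⟩ : ℂ) = dist c (γ₂ 1) by
      rw [Complex.dist_eq_re_im, hγ₂1]
      show Real.sqrt ((0 - p)^2 + (0-q)^2) = dist c (γ (T+η))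
      rw [show (0 - p)^2 + ((0:ℝ)-q)^2 = p^2 + q^2 by ring, hpq1,
        Real.sqrt_sq hLnn])
    (show dist (⟨σ*T, 0⟩ : ℂ) (⟨p, q⟩ : ℂ) = dist (γ (T * 1)) (γ₂ 1) by
      rw [Complex.dist_eq_re_im, mul_one, hγ₂1, hyz]
      show Real.sqrt ((σ*T - p)^2 + (0-q)^2) = σ*η
      rw [show (σ*T - p)^2 + ((0:ℝ)-q)^2 = (p - σ*T)^2 + q^2 by ring, hpq2,
        Real.sqrt_sq (by positivity)])
    s₀ hs₀mem 1 ⟨zero_le_one, le_rfl⟩).2.1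
  have hTs₀ : T * s₀ = T - η := by
    rw [hs₀]; field_simp
  have hlhs : dist (γ (T * s₀)) (γ (T + η * 1)) = 2 * (σ * η) := by
    rw [hTs₀, mul_one, hwabs (T - η) (T + η) le_rfl (by linarith) (by linarith) le_rfl,
      abs_of_nonpos (by linarith)]
    ring
  have hpt1 : (⟨0,0⟩ : ℂ) + s₀ • ((⟨σ*T, 0⟩ : ℂ) - ⟨0,0⟩) = (⟨s₀*(σ*T), 0⟩ : ℂ) := by
    apply Complex.ext <;> simp [Complex.real_smul]
  have hpt2 : (⟨σ*T, 0⟩ : ℂ) + (1:ℝ) • ((⟨p, q⟩ : ℂ) - ⟨σ*T, 0⟩) = (⟨p, q⟩ : ℂ) := by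
    rw [one_smul]; ring
  rw [hpt1, hpt2, hlhs] at H
  have hs₀a : s₀ * (σ*T) = σ*T - σ*η := by
    rw [hs₀]; field_simp
  have hrhs : dist ((⟨s₀*(σ*T), 0⟩ : ℂ)) ((⟨p, q⟩ : ℂ))
      = Real.sqrt ((σ*T - σ*η - p)^2 + q^2) := by
    rw [Complex.dist_eq_re_im]
    show Real.sqrt ((s₀*(σ*T) - p)^2 + (0-q)^2) = _
    rw [hs₀a]
    congr 1
    ring
  rw [hrhs] at H
  -- square the inequality
  have hEnn : (0:ℝ) ≤ (σ*T - σ*η - p)^2 + q^2 := by positivity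
  have key : (2*(σ*η))^2 ≤ (σ*T - σ*η - p)^2 + q^2 := by
    have h2 := pow_le_pow_left₀ (by positivity) H 2
    rwa [Real.sq_sqrt hEnn] at h2
  -- algebra
  have e3 : 2*(σ*T)*p = (σ*T)^2 + (dist c (γ (T+η)))^2 - (σ*η)^2 := by
    linear_combination hpq1 - hpq2
  have akey : (σ*T)*((2*(σ*η))^2) ≤ (σ*T)*((σ*T - σ*η - p)^2 + q^2) :=
    mul_le_mul_of_nonneg_left key (by positivity)
  have e1a : (σ*T)*(p^2 + q^2) = (σ*T)*(dist c (γ (T+η)))^2 := by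
    rw [hpq1]
  have e3b : 2*(σ*T)*p*(σ*η) = ((σ*T)^2 + (dist c (γ (T+η)))^2 - (σ*η)^2)*(σ*η) := by
    linear_combination (σ*η) * e3
  have hbsq : (σ*η)*((σ*T + σ*η)^2) ≤ (σ*η)*((dist c (γ (T+η)))^2) := by
    nlinarith [akey, e1a, e3b]
  have hsq : (σ*T + σ*η)^2 ≤ (dist c (γ (T+η)))^2 :=
    le_of_mul_le_mul_left hbsq (by positivity)
  calc σ * (T + η) = Real.sqrt ((σ*T + σ*η)^2) := by
        rw [Real.sqrt_sq (by positivity)]; ring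
    _ ≤ Real.sqrt ((dist c (γ (T+η)))^2) := Real.sqrt_le_sqrt hsq
    _ = dist c (γ (T+η)) := Real.sqrt_sq hLnn

/-- in a uniquely geodesic space in which every geodesic triangle
with one vertex at `c` satisfies the CAT(0) comparison inequality (with Euclidean
comparison triangles, here modeled in `ℂ`), every local geodesic starting at `c`
is a global geodesic. -/
theorem local_geodesic_from_vertex_is_geodesic {X : Type*} [MetricSpace X] (c : X)
    (hgeo : ∀ x y : X, ∃ γ : ℝ → X, γ 0 = x ∧ γ 1 = y ∧ IsGeodesic γ)
    (huniq : ∀ γ γ' : ℝ → X, IsGeodesic γ → IsGeodesic γ' →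
      γ 0 = γ' 0 → γ 1 = γ' 1 → Set.EqOn γ γ' (Set.Icc 0 1))
    (hcat : ∀ γ₁ γ₂ γ₃ : ℝ → X, IsGeodesic γ₁ → IsGeodesic γ₂ → IsGeodesic γ₃ →
      γ₁ 0 = c → γ₂ 0 = c → γ₃ 0 = γ₁ 1 → γ₃ 1 = γ₂ 1 →
      ∀ x' y' z' : ℂ,
        dist x' y' = dist c (γ₁ 1) → dist x' z' = dist c (γ₂ 1) →
        dist y' z' = dist (γ₁ 1) (γ₂ 1) →
        ∀ s ∈ Set.Icc (0:ℝ) 1, ∀ t ∈ Set.Icc (0:ℝ) 1,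
          dist (γ₁ s) (γ₂ t) ≤ dist (x' + s • (y' - x')) (x' + t • (z' - x')) ∧
          dist (γ₁ s) (γ₃ t) ≤ dist (x' + s • (y' - x')) (y' + t • (z' - y')) ∧
          dist (γ₂ s) (γ₃ t) ≤ dist (x' + s • (z' - x')) (y' + t • (z' - y')))
    (γ : ℝ → X) (σ : ℝ) (hσ : 0 ≤ σ)
    (hloc : IsLocalGeodesicSpeed γ σ) (hγ0 : γ 0 = c) :
    IsGeodesicSpeed γ σ := by
  classical
  set S : Set ℝ := {t | t ∈ Set.Icc (0:ℝ) 1 ∧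
      ∀ s ∈ Set.Icc (0:ℝ) t, ∀ s' ∈ Set.Icc (0:ℝ) t,
        dist (γ s) (γ s') = σ * |s - s'|} with hSdef
  have absify : ∀ t : ℝ,
      (∀ s s' : ℝ, 0 ≤ s → s ≤ s' → s' ≤ t → dist (γ s) (γ s') = σ * (s' - s)) →
      ∀ s ∈ Set.Icc (0:ℝ) t, ∀ s' ∈ Set.Icc (0:ℝ) t,
        dist (γ s) (γ s') = σ * |s - s'| := by
    intro t h s hs s' hs'
    rcases le_total s s' with hss | hss
    · rw [h s s' hs.1 hss hs'.2, abs_of_nonpos (by linarith)]; ring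
    · rw [dist_comm, h s' s hs'.1 hss hs.2, abs_of_nonneg (by linarith)]
  have h0S : (0:ℝ) ∈ S := by
    refine ⟨⟨le_refl 0, zero_le_one⟩, absify 0 ?_⟩
    intro s s' h1 h2 h3
    have hs0 : s = 0 := le_antisymm (by linarith) h1
    have hs'0 : s' = 0 := le_antisymm h3 (by linarith)
    subst hs0; subst hs'0; simp
  have hbdd : BddAbove S := ⟨1, fun t ht => ht.1.2⟩
  set T := sSup S with hTdef
  have hT0 : 0 ≤ T := le_csSup hbdd h0S
  have hT1 : T ≤ 1 := csSup_le ⟨0, h0S⟩ fun t ht => ht.1.2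
  have hmemS : ∀ u : ℝ, 0 ≤ u → u < T → u ∈ S := by
    intro u hu huT
    obtain ⟨t, htS, hut⟩ := exists_lt_of_lt_csSup ⟨0, h0S⟩ huT
    exact ⟨⟨hu, le_trans hut.le htS.1.2⟩, fun s hs s' hs' =>
      htS.2 s ⟨hs.1, le_trans hs.2 hut.le⟩ s' ⟨hs'.1, le_trans hs'.2 hut.le⟩⟩
  obtain ⟨ε, hε, hloc'⟩ := hloc T ⟨hT0, hT1⟩
  have hlt : ∀ s s' : ℝ, 0 ≤ s → s ≤ s' → s' < T → dist (γ s) (γ s') = σ * (s' - s) := by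
    intro s s' h1 h2 h3
    obtain ⟨hmem, hfor⟩ := hmemS s' (le_trans h1 h2) h3
    rw [hfor s ⟨h1, h2⟩ s' ⟨le_trans h1 h2, le_refl _⟩, abs_of_nonpos (by linarith)]
    ring
  have hTS : T ∈ S := by
    refine ⟨⟨hT0, hT1⟩, absify T ?_⟩
    intro s s' h1 h2 h3
    rcases lt_or_eq_of_le h3 with h3' | h3'
    · exact hlt s s' h1 h2 h3'
    subst h3'
    rcases eq_or_lt_of_le h2 with h2' | h2'
    · subst h2'; simp
    have hw : ∀ w : ℝ, s ≤ w → T - ε ≤ w → w < T →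
        dist (γ w) (γ T) = σ * (T - w) := by
      intro w hw1 hw2 hw3
      have h := hloc' w ⟨⟨le_trans h1 hw1, by linarith⟩, ⟨hw2, by linarith⟩⟩
        T ⟨⟨hT0, hT1⟩, ⟨by linarith, by linarith⟩⟩
      rw [h, abs_of_nonpos (by linarith)]; ring
    apply le_antisymm
    · set w := max s (T - ε) with hwdef
      have hw1 : s ≤ w := le_max_left _ _
      have hw3 : w < T := max_lt h2' (by linarith)
      calc dist (γ s) (γ T) ≤ dist (γ s) (γ w) + dist (γ w) (γ T) := dist_triangle _ _ _
        _ = σ * (w - s) + σ * (T - w) := by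
            rw [hlt s w h1 hw1 hw3, hw w hw1 (le_max_right _ _) hw3]
        _ = σ * (T - s) := by ring
    · apply le_of_forall_sub_le
      intro ρ hρ
      rcases eq_or_lt_of_le hσ with hσ0 | hσpos
      · rw [← hσ0]; have := dist_nonneg (x := γ s) (y := γ T); linarith
      set w := max s (max (T - ε) (T - ρ / (2*σ))) with hwdef
      have hw1 : s ≤ w := le_max_left _ _
      have hρσ : 0 < ρ / (2*σ) := by positivity
      have hw3 : w < T := max_lt h2' (max_lt (by linarith) (by linarith))
      have hw2 : T - ε ≤ w := le_trans (le_max_left _ _) (le_max_right _ _)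
      have hw4 : T - ρ / (2*σ) ≤ w := le_trans (le_max_right _ _) (le_max_right _ _)
      have h2σ : 2*σ*(T - w) ≤ ρ := by
        have := (le_div_iff₀ (by positivity : (0:ℝ) < 2*σ)).mp (by linarith : T - w ≤ ρ / (2*σ))
        linarith
      have hd1 := hlt s w h1 hw1 hw3
      have hd2 := hw w hw1 hw2 hw3
      have htri : dist (γ s) (γ w) ≤ dist (γ s) (γ T) + dist (γ w) (γ T) := by
        calc dist (γ s) (γ w) ≤ dist (γ s) (γ T) + dist (γ T) (γ w) := dist_triangle _ _ _
          _ = dist (γ s) (γ T) + dist (γ w) (γ T) := by rw [dist_comm (γ T) (γ w)]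
      rw [hd1] at htri
      rw [hd2] at htri
      linarith
  have hT1' : T = 1 := by
    by_contra hne
    have hTlt : T < 1 := lt_of_le_of_ne hT1 hne
    rcases eq_or_lt_of_le hT0 with hT0' | hTpos
    · -- T = 0
      have hmin : min ε 1 ∈ S := by
        refine ⟨⟨le_min hε.le zero_le_one, min_le_right _ _⟩, ?_⟩
        intro s hs s' hs'
        have hsε : s ≤ ε := le_trans hs.2 (min_le_left _ _)
        have hs1 : s ≤ 1 := le_trans hs.2 (min_le_right _ _)
        have hs'ε : s' ≤ ε := le_trans hs'.2 (min_le_left _ _)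
        have hs'1 : s' ≤ 1 := le_trans hs'.2 (min_le_right _ _)
        exact hloc' s ⟨⟨hs.1, hs1⟩, ⟨by linarith [hs.1], by linarith⟩⟩
          s' ⟨⟨hs'.1, hs'1⟩, ⟨by linarith [hs'.1], by linarith⟩⟩
      have := le_csSup hbdd hmin
      have hminpos : 0 < min ε 1 := lt_min hε one_pos
      rw [← hTdef] at this
      linarith [hT0'.symm ▸ this]
    · -- 0 < T
      set η := min ε (min T (1 - T)) with hηdef
      have hηpos : 0 < η := lt_min hε (lt_min hTpos (by linarith))
      have hηε : η ≤ ε := min_le_left _ _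
      have hηT : η ≤ T := le_trans (min_le_right _ _) (min_le_left _ _)
      have hηT1 : η ≤ 1 - T := le_trans (min_le_right _ _) (min_le_right _ _)
      have hTf : ∀ s s' : ℝ, 0 ≤ s → s ≤ s' → s' ≤ T →
          dist (γ s) (γ s') = σ * (s' - s) := by
        intro s s' h1 h2 h3
        rw [hTS.2 s ⟨h1, by linarith⟩ s' ⟨by linarith, h3⟩, abs_of_nonpos (by linarith)]
        ring
      have hwabs : ∀ x y : ℝ, T - η ≤ x → x ≤ T + η → T - η ≤ y → y ≤ T + η →
          dist (γ x) (γ y) = σ * |x - y| := by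
        intro x y hx1 hx2 hy1 hy2
        exact hloc' x ⟨⟨by linarith, by linarith⟩, ⟨by linarith, by linarith⟩⟩
          y ⟨⟨by linarith, by linarith⟩, ⟨by linarith, by linarith⟩⟩
      have hwf : ∀ s s' : ℝ, T - η ≤ s → s ≤ s' → s' ≤ T + η →
          dist (γ s) (γ s') = σ * (s' - s) := by
        intro s s' h1 h2 h3
        rw [hwabs s s' h1 (by linarith) (by linarith) h3, abs_of_nonpos (by linarith)]
        ring
      have hub : ∀ s s' : ℝ, 0 ≤ s → s ≤ s' → s' ≤ T + η →
          dist (γ s) (γ s') ≤ σ * (s' - s) := by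
        intro s s' h1 h2 h3
        rcases le_total s' T with h | h
        · exact le_of_eq (hTf s s' h1 h2 h)
        rcases le_total T s with h' | h'
        · exact le_of_eq (hwf s s' (by linarith) h2 h3)
        calc dist (γ s) (γ s') ≤ dist (γ s) (γ T) + dist (γ T) (γ s') := dist_triangle _ _ _
          _ = σ * (T - s) + σ * (s' - T) := by
              rw [hTf s T h1 h' le_rfl, hwf T s' (by linarith) h h3]
          _ = σ * (s' - s) := by ring
      have hcz : dist c (γ (T + η)) = σ * (T + η) := by
        have hle : dist c (γ (T + η)) ≤ σ * (T + η) := by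
          have h := hub 0 (T + η) le_rfl (by linarith) le_rfl
          rw [hγ0] at h; linarith
        refine le_antisymm hle ?_
        rcases eq_or_lt_of_le hσ with hσ0 | hσpos
        · rw [← hσ0]; have := dist_nonneg (x := c) (y := γ (T+η)); linarith
        exact cat_step c hgeo hcat γ σ T η hσpos hTpos hηpos hηT hγ0 hTS.2 hwabs
      have hcu : ∀ u : ℝ, 0 ≤ u → u ≤ T + η → dist c (γ u) = σ * u := by
        intro u h1 h2
        have hle : dist c (γ u) ≤ σ * u := by
          have h := hub 0 u le_rfl h1 h2
          rw [hγ0] at h; linarith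
        refine le_antisymm hle ?_
        have htr : dist c (γ (T + η)) ≤ dist c (γ u) + dist (γ u) (γ (T + η)) :=
          dist_triangle _ _ _
        have h := hub u (T + η) h1 h2 le_rfl
        rw [hcz] at htr
        linarith
      have hTη : T + η ∈ S := by
        refine ⟨⟨by linarith, by linarith⟩, absify _ ?_⟩
        intro s s' h1 h2 h3
        refine le_antisymm (hub s s' h1 h2 h3) ?_
        have htr := dist_triangle c (γ s) (γ s')
        rw [hcu s h1 (by linarith), hcu s' (le_trans h1 h2) h3] at htr
        linarith
      have := le_csSup hbdd hTη
      rw [← hTdef] at this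
      linarith
  intro s hs t ht
  rw [hT1'] at hTS
  exact hTS.2 s hs t ht
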